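/- Let a, b, μ, ζ₁, ζ₂ be complex numbers with μ ≠ 0, ζ₁ ≠ 0, and ζ₂ ≠ 0. Then the determinant of the 5×5 matrix [[a, −1, 0, 0, 0],[a, −ζ₁ cos μ, −ζ₁ (sin μ)/μ, 0, 0],[a, 0, 0, −1, 0],[a, 0, 0, −ζ₂ cos μ, −ζ₂ (sin μ)/μ],[b, −ζ₁ μ sin μ, ζ₁ cos μ − 1, −ζ₂ μ sin μ, ζ₂ cos μ − 1]] equals ζ₁·ζ₂·((sin μ)/μ)·( 4a cos μ + b (sin μ)/μ − a(ζ₁ + ζ₁^{-1} + ζ₂ + ζ₂^{-1}) ). -/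

import Mathlib

/-- The determinant formula D(a,b) (equation (37) of the paper) for the 5×5 matching
matrix of the decorated square-grid quantum graph Γ*. -/
theorem decorated_grid_determinant
    (a b μ ζ₁ ζ₂ : ℂ) (hμ : μ ≠ 0) (hζ₁ : ζ₁ ≠ 0) (hζ₂ : ζ₂ ≠ 0) :
    Matrix.det
      !![a, -1, 0, 0, 0;
         a, -ζ₁ * Complex.cos μ, -ζ₁ * (Complex.sin μ / μ), 0, 0;
         a, 0, 0, -1, 0;
         a, 0, 0, -ζ₂ * Complex.cos μ, -ζ₂ * (Complex.sin μ / μ);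
         b, -ζ₁ * μ * Complex.sin μ, ζ₁ * Complex.cos μ - 1,
            -ζ₂ * μ * Complex.sin μ, ζ₂ * Complex.cos μ - 1]
      = ζ₁ * ζ₂ * (Complex.sin μ / μ) *
          (4 * a * Complex.cos μ + b * (Complex.sin μ / μ)
            - a * (ζ₁ + ζ₁⁻¹ + ζ₂ + ζ₂⁻¹)) := by
  have h := Complex.sin_sq_add_cos_sq μ
  simp [Matrix.det_succ_row_zero, Fin.sum_univ_succ, Fin.succAbove]
  have h1 : ζ₁ * ζ₁⁻¹ = 1 := mul_inv_cancel₀ hζ₁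
  have h2 : ζ₂ * ζ₂⁻¹ = 1 := mul_inv_cancel₀ hζ₂
  have h3 : μ * μ⁻¹ = 1 := mul_inv_cancel₀ hμ
  linear_combination (-(a * ζ₁ * ζ₂ * (ζ₁ + ζ₂) * Complex.sin μ * μ⁻¹)) * h
    + a * ζ₂ * Complex.sin μ * μ⁻¹ * h1 + a * ζ₁ * Complex.sin μ * μ⁻¹ * h2
    - a * ζ₁ * ζ₂ * (ζ₁ + ζ₂) * Complex.sin μ ^ 3 * μ⁻¹ * h3
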